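/- arXiv:1810.07116 — 7 statements merged into one kernel-verified Lean document; each statement's English description precedes it below -/
import Mathlib

section
/- Let I and I₁ be patterns with I ⊆ I₁ ⊆ ℐ, I nonempty and Supp(∧I₁) > 0. If bond(I) = bond(I₁), then Supp(∧I) = Supp(∧I₁), Supp(∨I) = Supp(∨I₁), and consequently Supp(¬I) = Supp(¬I₁). -/
open Finset

variable {τ ι : Type*} [DecidableEq ι]

/-- Conjunctive support: number of transactions containing the whole pattern. -/
def suppConj (T : Finset τ) (items : τ → Finset ι) (X : Finset ι) : ℕ :=
  (T.filter fun t => X ⊆ items t).card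

/-- Disjunctive support: number of transactions containing at least one item of the pattern. -/
def suppDisj (T : Finset τ) (items : τ → Finset ι) (X : Finset ι) : ℕ :=
  (T.filter fun t => (X ∩ items t).Nonempty).card

/-- Negative support: number of transactions containing no item of the pattern. -/
def suppNeg (T : Finset τ) (items : τ → Finset ι) (X : Finset ι) : ℕ :=
  (T.filter fun t => X ∩ items t = ∅).card

/-- The bond measure (division by zero in `ℚ` yields `0`, matching the convention). -/
def bond (T : Finset τ) (items : τ → Finset ι) (X : Finset ι) : ℚ :=
  (suppConj T items X : ℚ) / (suppDisj T items X : ℚ)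

theorem stmt0 (T : Finset τ) (items : τ → Finset ι) (I : Finset ι)
    (hitems : ∀ t ∈ T, items t ⊆ I)
    (X X₁ : Finset ι) (hsub : X ⊆ X₁) (hsubI : X₁ ⊆ I) (hne : X.Nonempty)
    (hpos : 0 < suppConj T items X₁)
    (hbond : bond T items X = bond T items X₁) :
    suppConj T items X = suppConj T items X₁ ∧
      suppDisj T items X = suppDisj T items X₁ ∧
        suppNeg T items X = suppNeg T items X₁ := by
  set a := suppConj T items X with ha
  set a₁ := suppConj T items X₁ with ha₁
  set b := suppDisj T items X with hb
  set b₁ := suppDisj T items X₁ with hb₁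
  have hca : a₁ ≤ a := by
    apply Finset.card_le_card
    intro t ht
    simp only [Finset.mem_filter] at ht ⊢
    exact ⟨ht.1, hsub.trans ht.2⟩
  have hdb : b ≤ b₁ := by
    apply Finset.card_le_card
    intro t ht
    simp only [Finset.mem_filter] at ht ⊢
    exact ⟨ht.1, ht.2.mono (Finset.inter_subset_inter_right hsub)⟩
  have hab : a ≤ b := by
    apply Finset.card_le_card
    intro t ht
    simp only [Finset.mem_filter] at ht ⊢
    obtain ⟨x, hx⟩ := hne
    exact ⟨ht.1, ⟨x, Finset.mem_inter.2 ⟨hx, ht.2 hx⟩⟩⟩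
  have hapos : 0 < a := lt_of_lt_of_le hpos hca
  have hbpos : 0 < b := lt_of_lt_of_le hapos hab
  have hb₁pos : 0 < b₁ := lt_of_lt_of_le hbpos hdb
  have key : a * b₁ = a₁ * b := by
    have := hbond
    rw [bond, bond, div_eq_div_iff (show (b:ℚ) ≠ 0 by exact_mod_cast hbpos.ne') (show (b₁:ℚ) ≠ 0 by exact_mod_cast hb₁pos.ne')] at this
    exact_mod_cast this
  have h1 : a * b₁ ≤ a * b := by nlinarith
  have hbb : b = b₁ := le_antisymm hdb (Nat.le_of_mul_le_mul_left h1 hapos)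
  have haa : a = a₁ := by
    have : a * b = a₁ * b := by rw [← key, hbb]
    exact Nat.eq_of_mul_eq_mul_right hbpos this
  refine ⟨haa, hbb, ?_⟩
  have hn : ∀ Y : Finset ι, suppDisj T items Y + suppNeg T items Y = T.card := by
    intro Y
    rw [suppDisj, suppNeg]
    have : (T.filter fun t => Y ∩ items t = ∅) =
        T.filter fun t => ¬(Y ∩ items t).Nonempty := by
      simp [Finset.not_nonempty_iff_eq_empty]
    rw [this, Finset.card_filter_add_card_filter_not]
  have h1 := hn X
  have h2 := hn X₁
  rw [← hb, ← hb₁] at *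
  omega
end

section
/- Let I and I₁ be nonempty patterns of ℐ with Supp(∧I) > 0 and Supp(∧I₁) > 0 that belong to the same equivalence class of f_bond, i.e. f_bond(I) = f_bond(I₁). Then bond(I) = bond(I₁), Supp(∧I) = Supp(∧I₁), Supp(∨I) = Supp(∨I₁), and Supp(¬I) = Supp(¬I₁). -/
open Finset

variable {τ ι : Type*} [DecidableEq ι]

/-- The closure operator associated with the bond measure:
`f_bond(X) = X ∪ {i ∈ ℐ \ X : bond (X ∪ {i}) = bond X}`. -/
def fbond (T : Finset τ) (items : τ → Finset ι) (I : Finset ι) (X : Finset ι) : Finset ι :=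
  X ∪ (I \ X).filter fun i => bond T items (insert i X) = bond T items X

lemma disjPos {T : Finset τ} {items : τ → Finset ι} {X : Finset ι}
    (hne : X.Nonempty) (h : 0 < suppConj T items X) : 0 < suppDisj T items X := by
  obtain ⟨t, ht⟩ := Finset.card_pos.mp h
  simp only [Finset.mem_filter] at ht
  refine Finset.card_pos.mpr ⟨t, Finset.mem_filter.mpr ⟨ht.1, ?_⟩⟩
  obtain ⟨x, hx⟩ := hne
  exact ⟨x, Finset.mem_inter.mpr ⟨hx, ht.2 hx⟩⟩

lemma conjStep {T : Finset τ} {items : τ → Finset ι} {X : Finset ι} {i : ι}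
    (hne : X.Nonempty) (hpos : 0 < suppConj T items X)
    (hb : bond T items (insert i X) = bond T items X) :
    suppConj T items (insert i X) = suppConj T items X ∧
    suppDisj T items (insert i X) = suppDisj T items X := by
  have hd : 0 < suppDisj T items X := disjPos hne hpos
  have hca : suppConj T items (insert i X) ≤ suppConj T items X := by
    apply Finset.card_le_card
    intro t ht
    simp only [Finset.mem_filter] at *
    exact ⟨ht.1, fun x hx => ht.2 (Finset.mem_insert_of_mem hx)⟩
  have hdb : suppDisj T items X ≤ suppDisj T items (insert i X) := by
    apply Finset.card_le_card
    intro t ht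
    simp only [Finset.mem_filter] at *
    obtain ⟨x, hx⟩ := ht.2
    rw [Finset.mem_inter] at hx
    exact ⟨ht.1, ⟨x, Finset.mem_inter.mpr ⟨Finset.mem_insert_of_mem hx.1, hx.2⟩⟩⟩
  have hd' : 0 < suppDisj T items (insert i X) := lt_of_lt_of_le hd hdb
  have hq : (suppConj T items (insert i X) : ℚ) * suppDisj T items X
      = suppConj T items X * suppDisj T items (insert i X) := by
    have h1 : ((suppDisj T items (insert i X) : ℚ)) ≠ 0 := by positivity
    have h2 : ((suppDisj T items X : ℚ)) ≠ 0 := by positivity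
    unfold bond at hb
    exact (div_eq_div_iff h1 h2).mp hb
  have hqn : suppConj T items (insert i X) * suppDisj T items X
      = suppConj T items X * suppDisj T items (insert i X) := by
    exact_mod_cast hq
  constructor
  · nlinarith
  · nlinarith

lemma conjFilter {T : Finset τ} {items : τ → Finset ι} {I X : Finset ι}
    (hne : X.Nonempty) (hpos : 0 < suppConj T items X) :
    T.filter (fun t => fbond T items I X ⊆ items t) = T.filter (fun t => X ⊆ items t) := by
  apply Finset.Subset.antisymm
  · intro t ht
    simp only [Finset.mem_filter] at *
    exact ⟨ht.1, fun x hx => ht.2 (Finset.mem_union_left _ hx)⟩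
  · intro t ht
    simp only [Finset.mem_filter] at ht ⊢
    refine ⟨ht.1, fun j hj => ?_⟩
    rw [fbond, Finset.mem_union] at hj
    rcases hj with hj | hj
    · exact ht.2 hj
    · rw [Finset.mem_filter] at hj
      have := (conjStep hne hpos hj.2).1
      have hsub : T.filter (fun t => insert j X ⊆ items t) ⊆ T.filter (fun t => X ⊆ items t) := by
        intro s hs
        simp only [Finset.mem_filter] at *
        exact ⟨hs.1, fun x hx => hs.2 (Finset.mem_insert_of_mem hx)⟩
      have heq : T.filter (fun t => X ⊆ items t) = T.filter (fun t => insert j X ⊆ items t) :=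
        (Finset.eq_of_subset_of_card_le hsub (le_of_eq this.symm)).symm
      have ht' : t ∈ T.filter (fun t => insert j X ⊆ items t) := by
        rw [← heq]; exact Finset.mem_filter.mpr ht
      exact (Finset.mem_filter.mp ht').2 (Finset.mem_insert_self j X)

lemma disjFilter {T : Finset τ} {items : τ → Finset ι} {I X : Finset ι}
    (hne : X.Nonempty) (hpos : 0 < suppConj T items X) :
    T.filter (fun t => (fbond T items I X ∩ items t).Nonempty)
      = T.filter (fun t => (X ∩ items t).Nonempty) := by
  apply Finset.Subset.antisymm
  · intro t ht
    simp only [Finset.mem_filter] at ht ⊢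
    obtain ⟨j, hj⟩ := ht.2
    rw [Finset.mem_inter] at hj
    obtain ⟨hj1, hj2⟩ := hj
    rw [fbond, Finset.mem_union] at hj1
    rcases hj1 with hj1 | hj1
    · exact ⟨ht.1, ⟨j, Finset.mem_inter.mpr ⟨hj1, hj2⟩⟩⟩
    · rw [Finset.mem_filter] at hj1
      have := (conjStep hne hpos hj1.2).2
      have hsub : T.filter (fun t => (X ∩ items t).Nonempty)
          ⊆ T.filter (fun t => ((insert j X) ∩ items t).Nonempty) := by
        intro s hs
        simp only [Finset.mem_filter] at *
        obtain ⟨x, hx⟩ := hs.2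
        rw [Finset.mem_inter] at hx
        exact ⟨hs.1, ⟨x, Finset.mem_inter.mpr ⟨Finset.mem_insert_of_mem hx.1, hx.2⟩⟩⟩
      have heq := Finset.eq_of_subset_of_card_le hsub (le_of_eq this)
      have ht' : t ∈ T.filter (fun t => ((insert j X) ∩ items t).Nonempty) :=
        Finset.mem_filter.mpr ⟨ht.1, ⟨j, Finset.mem_inter.mpr ⟨Finset.mem_insert_self _ _, hj2⟩⟩⟩
      rw [← heq] at ht'
      exact Finset.mem_filter.mp ht'
  · intro t ht
    simp only [Finset.mem_filter] at ht ⊢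
    obtain ⟨x, hx⟩ := ht.2
    rw [Finset.mem_inter] at hx
    exact ⟨ht.1, ⟨x, Finset.mem_inter.mpr ⟨Finset.mem_union_left _ hx.1, hx.2⟩⟩⟩

theorem stmt1 (T : Finset τ) (items : τ → Finset ι) (I : Finset ι)
    (hitems : ∀ t ∈ T, items t ⊆ I)
    (X X₁ : Finset ι) (hXI : X ⊆ I) (hX₁I : X₁ ⊆ I)
    (hXne : X.Nonempty) (hX₁ne : X₁.Nonempty)
    (hXpos : 0 < suppConj T items X) (hX₁pos : 0 < suppConj T items X₁)
    (hcl : fbond T items I X = fbond T items I X₁) :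
    bond T items X = bond T items X₁ ∧
      suppConj T items X = suppConj T items X₁ ∧
        suppDisj T items X = suppDisj T items X₁ ∧
          suppNeg T items X = suppNeg T items X₁ := by
  have hc : suppConj T items X = suppConj T items X₁ := by
    unfold suppConj
    rw [← conjFilter (I := I) hXne hXpos, ← conjFilter (I := I) hX₁ne hX₁pos, hcl]
  have hdj : suppDisj T items X = suppDisj T items X₁ := by
    unfold suppDisj
    rw [← disjFilter (I := I) hXne hXpos, ← disjFilter (I := I) hX₁ne hX₁pos, hcl]
  have hneg : suppNeg T items X = suppNeg T items X₁ := by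
    have key : ∀ Y : Finset ι, suppNeg T items Y + suppDisj T items Y = T.card := by
      intro Y
      unfold suppNeg suppDisj
      have h := Finset.card_filter_add_card_filter_not (s := T)
        (p := fun t => Y ∩ items t = ∅)
      have he : T.filter (fun t => ¬ Y ∩ items t = ∅)
          = T.filter (fun t => (Y ∩ items t).Nonempty) := by
        apply Finset.filter_congr
        intro t _
        simp [Finset.nonempty_iff_ne_empty]
      rw [he] at h
      exact h
    have h1 := key X
    have h2 := key X₁
    omega
  exact ⟨by rw [bond, bond, hc, hdj], hc, hdj, hneg⟩
end

section
/- The set MMC of minimal correlated patterns is an order ideal (on nonempty patterns): if I ∈ MMC and I₁ is a nonempty subset of I, then I₁ ∈ MMC. -/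
open Finset

variable {τ ι : Type*} [DecidableEq ι]

/-- Minimal correlated patterns: correlated patterns no strict subset of which
has the same bond value. -/
def MMC (T : Finset τ) (items : τ → Finset ι) (I : Finset ι) (minbond : ℚ) :
    Set (Finset ι) :=
  {X | X ⊆ I ∧ minbond ≤ bond T items X ∧
    ∀ Y : Finset ι, Y ⊂ X → bond T items Y ≠ bond T items X}

lemma suppConj_anti (T : Finset τ) (items : τ → Finset ι) {Y X : Finset ι} (h : Y ⊆ X) :
    suppConj T items X ≤ suppConj T items Y := by
  apply Finset.card_le_card
  intro t ht
  rw [Finset.mem_filter] at ht ⊢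
  exact ⟨ht.1, h.trans ht.2⟩

lemma suppDisj_mono (T : Finset τ) (items : τ → Finset ι) {Y X : Finset ι} (h : Y ⊆ X) :
    suppDisj T items Y ≤ suppDisj T items X := by
  apply Finset.card_le_card
  intro t ht
  rw [Finset.mem_filter] at ht ⊢
  exact ⟨ht.1, ht.2.mono (Finset.inter_subset_inter h (Finset.Subset.refl _))⟩

lemma bond_anti (T : Finset τ) (items : τ → Finset ι) {Y X : Finset ι} (h : Y ⊆ X)
    (hd : 0 < suppDisj T items Y) :
    bond T items X ≤ bond T items Y := by
  unfold bond
  apply div_le_div₀ (by positivity)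
  · exact_mod_cast suppConj_anti T items h
  · exact_mod_cast hd
  · exact_mod_cast suppDisj_mono T items h

theorem stmt2 (T : Finset τ) (items : τ → Finset ι) (I : Finset ι)
    (hitems : ∀ t ∈ T, items t ⊆ I)
    (minbond : ℚ) (hb0 : 0 < minbond) (hb1 : minbond ≤ 1)
    (X : Finset ι) (hX : X ∈ MMC T items I minbond)
    (X₁ : Finset ι) (hX₁ne : X₁.Nonempty) (hX₁X : X₁ ⊆ X) :
    X₁ ∈ MMC T items I minbond := by
  obtain ⟨hXI, hXb, hXmin⟩ := hX
  have hbXpos : 0 < bond T items X := lt_of_lt_of_le hb0 hXb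
  have hcX : 0 < suppConj T items X := by
    rcases Nat.eq_zero_or_pos (suppConj T items X) with h | h
    · exfalso
      rw [bond, h] at hbXpos
      simp at hbXpos
    · exact h
  -- a transaction containing all of X
  obtain ⟨t₀, ht₀⟩ := Finset.card_pos.mp hcX
  rw [Finset.mem_filter] at ht₀
  have hdX₁ : 0 < suppDisj T items X₁ := by
    apply Finset.card_pos.mpr
    obtain ⟨a, ha⟩ := hX₁ne
    exact ⟨t₀, Finset.mem_filter.mpr ⟨ht₀.1,
      ⟨a, Finset.mem_inter.mpr ⟨ha, ht₀.2 (hX₁X ha)⟩⟩⟩⟩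
  have hbX₁ : minbond ≤ bond T items X₁ :=
    le_trans hXb (bond_anti T items hX₁X hdX₁)
  refine ⟨hX₁X.trans hXI, hbX₁, ?_⟩
  intro Y hYX₁ hbeq
  -- Y is correlated too, so its supports are positive
  have hbY : 0 < bond T items Y := by
    rw [hbeq]; exact lt_of_lt_of_le hb0 hbX₁
  have hdY : 0 < suppDisj T items Y := by
    rcases Nat.eq_zero_or_pos (suppDisj T items Y) with h | h
    · exfalso; rw [bond, h] at hbY; simp at hbY
    · exact h
  have hcY : 0 < suppConj T items Y := by
    rcases Nat.eq_zero_or_pos (suppConj T items Y) with h | h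
    · exfalso; rw [bond, h] at hbY; simp at hbY
    · exact h
  have hcX₁ : 0 < suppConj T items X₁ := by
    rcases Nat.eq_zero_or_pos (suppConj T items X₁) with h | h
    · exfalso
      have : 0 < bond T items X₁ := lt_of_lt_of_le hb0 hbX₁
      rw [bond, h] at this; simp at this
    · exact h
  -- cross multiplication
  have hcle : suppConj T items X₁ ≤ suppConj T items Y :=
    suppConj_anti T items hYX₁.subset
  have hdle : suppDisj T items Y ≤ suppDisj T items X₁ :=
    suppDisj_mono T items hYX₁.subset
  have hcross : (suppConj T items Y : ℚ) * (suppDisj T items X₁ : ℚ)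
      = (suppConj T items X₁ : ℚ) * (suppDisj T items Y : ℚ) := by
    have := hbeq
    rw [bond, bond, div_eq_div_iff (by positivity) (by positivity)] at this
    linarith [this]
  have hcEq : suppConj T items Y = suppConj T items X₁ := by
    have h1 : (suppConj T items Y : ℚ) ≤ (suppConj T items X₁ : ℚ) := by
      have hd : (0:ℚ) < (suppDisj T items Y : ℚ) := by exact_mod_cast hdY
      nlinarith [hcross, (by exact_mod_cast hdle : (suppDisj T items Y : ℚ) ≤ (suppDisj T items X₁ : ℚ)),
        (by exact_mod_cast hcle : (suppConj T items X₁ : ℚ) ≤ (suppConj T items Y : ℚ))]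
    exact le_antisymm (by exact_mod_cast h1) hcle
  have hdEq : suppDisj T items Y = suppDisj T items X₁ := by
    have h1 : (suppDisj T items X₁ : ℚ) ≤ (suppDisj T items Y : ℚ) := by
      have hc : (0:ℚ) < (suppConj T items Y : ℚ) := by exact_mod_cast hcY
      nlinarith [hcross, (by exact_mod_cast hcle : (suppConj T items X₁ : ℚ) ≤ (suppConj T items Y : ℚ)),
        (by exact_mod_cast hdle : (suppDisj T items Y : ℚ) ≤ (suppDisj T items X₁ : ℚ))]
    exact le_antisymm hdle (by exact_mod_cast h1)
  -- tidset equalities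
  have hfEq : T.filter (fun t => X₁ ⊆ items t) = T.filter (fun t => Y ⊆ items t) := by
    apply Finset.eq_of_subset_of_card_le
    · intro t ht
      rw [Finset.mem_filter] at ht ⊢
      exact ⟨ht.1, hYX₁.subset.trans ht.2⟩
    · exact le_of_eq hcEq
  have hgEq : T.filter (fun t => (Y ∩ items t).Nonempty)
      = T.filter (fun t => (X₁ ∩ items t).Nonempty) := by
    apply Finset.eq_of_subset_of_card_le
    · intro t ht
      rw [Finset.mem_filter] at ht ⊢
      exact ⟨ht.1, ht.2.mono (Finset.inter_subset_inter hYX₁.subset (Finset.Subset.refl _))⟩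
    · exact le_of_eq hdEq.symm
  have hf : ∀ t ∈ T, Y ⊆ items t → X₁ ⊆ items t := by
    intro t ht hYt
    have : t ∈ T.filter (fun t => X₁ ⊆ items t) := by
      rw [hfEq]; exact Finset.mem_filter.mpr ⟨ht, hYt⟩
    exact (Finset.mem_filter.mp this).2
  have hg : ∀ t ∈ T, (X₁ ∩ items t).Nonempty → (Y ∩ items t).Nonempty := by
    intro t ht hXt
    have : t ∈ T.filter (fun t => (Y ∩ items t).Nonempty) := by
      rw [hgEq]; exact Finset.mem_filter.mpr ⟨ht, hXt⟩
    exact (Finset.mem_filter.mp this).2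
  -- the substituted pattern
  set X' : Finset ι := Y ∪ (X \ X₁) with hX'def
  have hX'sub : X' ⊂ X := by
    constructor
    · intro a ha
      rcases Finset.mem_union.mp ha with h | h
      · exact hX₁X (hYX₁.subset h)
      · exact (Finset.mem_sdiff.mp h).1
    · intro hcon
      obtain ⟨a, haX₁, haY⟩ := Finset.exists_of_ssubset hYX₁
      have : a ∈ X' := hcon (hX₁X haX₁)
      rcases Finset.mem_union.mp this with h | h
      · exact haY h
      · exact (Finset.mem_sdiff.mp h).2 haX₁
  have hcX' : suppConj T items X' = suppConj T items X := by
    unfold suppConj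
    congr 1
    apply Finset.filter_congr
    intro t ht
    constructor
    · intro h
      intro a haX
      by_cases haX₁ : a ∈ X₁
      · exact hf t ht (fun b hb => h (Finset.mem_union_left _ hb)) haX₁
      · exact h (Finset.mem_union_right _ (Finset.mem_sdiff.mpr ⟨haX, haX₁⟩))
    · intro h
      exact hX'sub.subset.trans h
  have hdX' : suppDisj T items X' = suppDisj T items X := by
    unfold suppDisj
    congr 1
    apply Finset.filter_congr
    intro t ht
    constructor
    · intro ⟨a, ha⟩
      rw [Finset.mem_inter] at ha
      exact ⟨a, Finset.mem_inter.mpr ⟨hX'sub.subset ha.1, ha.2⟩⟩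
    · rintro ⟨a, ha⟩
      rw [Finset.mem_inter] at ha
      by_cases haX₁ : a ∈ X₁
      · obtain ⟨b, hb⟩ := hg t ht ⟨a, Finset.mem_inter.mpr ⟨haX₁, ha.2⟩⟩
        rw [Finset.mem_inter] at hb
        exact ⟨b, Finset.mem_inter.mpr ⟨Finset.mem_union_left _ hb.1, hb.2⟩⟩
      · exact ⟨a, Finset.mem_inter.mpr
          ⟨Finset.mem_union_right _ (Finset.mem_sdiff.mpr ⟨ha.1, haX₁⟩), ha.2⟩⟩
  exact hXmin X' hX'sub (by rw [bond, bond, hcX', hdX'])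
end

section
/- Let I ∈ MCR be a correlated rare pattern. Then every nonempty subset I₁ ⊆ I is correlated (bond(I₁) ≥ minbond), and every superset I₁ with I ⊆ I₁ ⊆ ℐ is rare (Supp(∧I₁) < minsupp). -/
open Finset

variable {τ ι : Type*} [DecidableEq ι]

/-- Correlated rare patterns: correlated (bond at least `minbond`) and rare
(conjunctive support below `minsupp`) subsets of the item set. -/
def MCR (T : Finset τ) (items : τ → Finset ι) (I : Finset ι) (minsupp : ℕ) (minbond : ℚ) :
    Set (Finset ι) :=
  {X | X ⊆ I ∧ minbond ≤ bond T items X ∧ suppConj T items X < minsupp}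

theorem stmt3 (T : Finset τ) (items : τ → Finset ι) (I : Finset ι)
    (hitems : ∀ t ∈ T, items t ⊆ I)
    (minsupp : ℕ) (minbond : ℚ)
    (hs : 1 ≤ minsupp) (hb0 : 0 < minbond) (hb1 : minbond ≤ 1)
    (X : Finset ι) (hX : X ∈ MCR T items I minsupp minbond) :
    (∀ X₁ : Finset ι, X₁.Nonempty → X₁ ⊆ X → minbond ≤ bond T items X₁) ∧
      (∀ X₁ : Finset ι, X ⊆ X₁ → X₁ ⊆ I → suppConj T items X₁ < minsupp) := by
  obtain ⟨-, hbond, hrare⟩ := hX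
  have hconj_anti : ∀ Y Z : Finset ι, Y ⊆ Z →
      suppConj T items Z ≤ suppConj T items Y := fun Y Z h =>
    Finset.card_le_card (Finset.monotone_filter_right T fun t _ ht => h.trans ht)
  constructor
  · intro X₁ hne hsub
    have hc : suppConj T items X ≤ suppConj T items X₁ := hconj_anti X₁ X hsub
    have hd : suppDisj T items X₁ ≤ suppDisj T items X :=
      Finset.card_le_card (Finset.monotone_filter_right T fun t _ ht =>
        ht.mono (Finset.inter_subset_inter_right hsub))
    have hcd : suppConj T items X ≤ suppDisj T items X₁ :=
      Finset.card_le_card (by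
        intro t ht
        simp only [Finset.mem_filter] at ht ⊢
        exact ⟨ht.1, hne.mono (Finset.subset_inter (Finset.Subset.refl X₁) (hsub.trans ht.2))⟩)
    by_contra hlt
    push_neg at hlt
    -- show suppConj X > 0 and suppDisj X > 0 from bond X ≥ minbond > 0
    have hbX : 0 < bond T items X := lt_of_lt_of_le hb0 hbond
    have hcpos : 0 < suppConj T items X := by
      by_contra h
      push_neg at h
      interval_cases h' : suppConj T items X
      · simp [bond, h'] at hbX
    have hdpos : 0 < suppDisj T items X₁ := lt_of_lt_of_le hcpos hcd
    have : bond T items X ≤ bond T items X₁ := by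
      unfold bond
      apply div_le_div₀ (by positivity) (by exact_mod_cast hc)
        (by exact_mod_cast hdpos) (by exact_mod_cast hd)
    exact absurd (hbond.trans this) (not_le.mpr hlt)
  · intro X₁ hsub _
    exact lt_of_le_of_lt (hconj_anti X X₁ hsub) hrare
end

section
/- Let X ∈ MCR and put F := f_bond(X). Then X ⊆ F, F ∈ MFCR (in particular F is itself a correlated rare pattern with no strict superset of the same bond value), bond(F) = bond(X), and Supp(∧F) = Supp(∧X). Moreover F is the least element of the set of closed supersets of X: F ⊆ G for every G ∈ MFCR with X ⊆ G. -/
open Finset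

variable {τ ι : Type*} [DecidableEq ι]

/-- Closed correlated rare patterns: no strict superset (within the item set)
has the same bond value. -/
def MFCR (T : Finset τ) (items : τ → Finset ι) (I : Finset ι) (minsupp : ℕ) (minbond : ℚ) :
    Set (Finset ι) :=
  {X | X ∈ MCR T items I minsupp minbond ∧
    ∀ Y : Finset ι, X ⊂ Y → Y ⊆ I → bond T items Y ≠ bond T items X}

lemma key_filters (T : Finset τ) (items : τ → Finset ι) (X Y : Finset ι)
    (hXY : X ⊆ Y) (hc : 0 < suppConj T items X) (hd : 0 < suppDisj T items X)
    (hb : bond T items Y = bond T items X) :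
    T.filter (fun t => Y ⊆ items t) = T.filter (fun t => X ⊆ items t) ∧
    T.filter (fun t => (Y ∩ items t).Nonempty) = T.filter (fun t => (X ∩ items t).Nonempty) := by
  have hsub1 : T.filter (fun t => Y ⊆ items t) ⊆ T.filter (fun t => X ⊆ items t) := by
    intro t ht
    simp only [mem_filter] at *
    exact ⟨ht.1, hXY.trans ht.2⟩
  have hsub2 : T.filter (fun t => (X ∩ items t).Nonempty) ⊆
      T.filter (fun t => (Y ∩ items t).Nonempty) := by
    intro t ht
    simp only [mem_filter] at *
    exact ⟨ht.1, ht.2.mono (inter_subset_inter hXY (Finset.Subset.refl _))⟩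
  have hc' : suppConj T items Y ≤ suppConj T items X := card_le_card hsub1
  have hd' : suppDisj T items X ≤ suppDisj T items Y := card_le_card hsub2
  have hdY : 0 < suppDisj T items Y := lt_of_lt_of_le hd hd'
  unfold bond at hb
  have hcross : (suppConj T items Y) * (suppDisj T items X) =
      (suppConj T items X) * (suppDisj T items Y) := by
    have h := (div_eq_div_iff (by exact_mod_cast hdY.ne' : (suppDisj T items Y : ℚ) ≠ 0)
      (by exact_mod_cast hd.ne' : (suppDisj T items X : ℚ) ≠ 0)).mp hb
    exact_mod_cast h
  have hdle : suppDisj T items Y ≤ suppDisj T items X := by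
    have h1 : suppConj T items X * suppDisj T items Y ≤
        suppConj T items X * suppDisj T items X := by
      rw [← hcross]; exact Nat.mul_le_mul_right _ hc'
    exact Nat.le_of_mul_le_mul_left h1 hc
  have hdeq : suppDisj T items Y = suppDisj T items X := le_antisymm hdle hd'
  have hceq : suppConj T items Y = suppConj T items X := by
    have := hcross
    rw [hdeq] at this
    exact Nat.eq_of_mul_eq_mul_right hd this
  constructor
  · exact eq_of_subset_of_card_le hsub1 (le_of_eq hceq.symm)
  · exact (eq_of_subset_of_card_le hsub2 (le_of_eq hdeq)).symm

theorem stmt9 (T : Finset τ) (items : τ → Finset ι) (I : Finset ι)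
    (hitems : ∀ t ∈ T, items t ⊆ I)
    (minsupp : ℕ) (minbond : ℚ)
    (hs : 1 ≤ minsupp) (hb0 : 0 < minbond) (hb1 : minbond ≤ 1)
    (X : Finset ι) (hX : X ∈ MCR T items I minsupp minbond) :
    let F := fbond T items I X
    X ⊆ F ∧ F ∈ MFCR T items I minsupp minbond ∧
      bond T items F = bond T items X ∧
        suppConj T items F = suppConj T items X ∧
          ∀ G ∈ MFCR T items I minsupp minbond, X ⊆ G → F ⊆ G := by
  intro F
  obtain ⟨hXI, hXb, hXr⟩ := hX
  have hbX : 0 < bond T items X := lt_of_lt_of_le hb0 hXb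
  have hd : 0 < suppDisj T items X := by
    rcases Nat.eq_zero_or_pos (suppDisj T items X) with h | h
    · exfalso; unfold bond at hbX; rw [h] at hbX; simp at hbX
    · exact h
  have hc : 0 < suppConj T items X := by
    rcases Nat.eq_zero_or_pos (suppConj T items X) with h | h
    · exfalso; unfold bond at hbX; rw [h] at hbX; simp at hbX
    · exact h
  have hFdef : F = X ∪ (I \ X).filter
      (fun i => bond T items (insert i X) = bond T items X) := rfl
  have hXF : X ⊆ F := by rw [hFdef]; exact subset_union_left
  have hFI : F ⊆ I := by
    rw [hFdef]
    exact union_subset hXI ((filter_subset _ _).trans sdiff_subset)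
  have hgood : ∀ i ∈ F, i ∉ X →
      (∀ t ∈ T, X ⊆ items t → i ∈ items t) ∧
      (∀ t ∈ T, i ∈ items t → (X ∩ items t).Nonempty) := by
    intro i hiF hiX
    rw [hFdef] at hiF
    rcases mem_union.mp hiF with h | h
    · exact absurd h hiX
    · obtain ⟨_, hbi⟩ := mem_filter.mp h
      obtain ⟨h1, h2⟩ := key_filters T items X (insert i X) (subset_insert i X) hc hd hbi
      constructor
      · intro t ht hXt
        have hm : t ∈ T.filter (fun t => X ⊆ items t) := mem_filter.mpr ⟨ht, hXt⟩
        rw [← h1] at hm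
        exact (mem_filter.mp hm).2 (mem_insert_self i X)
      · intro t ht hit
        have hm : t ∈ T.filter (fun t => ((insert i X) ∩ items t).Nonempty) :=
          mem_filter.mpr ⟨ht, ⟨i, mem_inter.mpr ⟨mem_insert_self _ _, hit⟩⟩⟩
        rw [h2] at hm
        exact (mem_filter.mp hm).2
  have hFc : T.filter (fun t => F ⊆ items t) = T.filter (fun t => X ⊆ items t) := by
    apply filter_congr
    intro t ht
    constructor
    · intro h; exact hXF.trans h
    · intro h j hjF
      by_cases hjX : j ∈ X
      · exact h hjX
      · exact (hgood j hjF hjX).1 t ht h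
  have hFd : T.filter (fun t => (F ∩ items t).Nonempty) =
      T.filter (fun t => (X ∩ items t).Nonempty) := by
    apply filter_congr
    intro t ht
    constructor
    · rintro ⟨j, hj⟩
      obtain ⟨hjF, hjt⟩ := mem_inter.mp hj
      by_cases hjX : j ∈ X
      · exact ⟨j, mem_inter.mpr ⟨hjX, hjt⟩⟩
      · exact (hgood j hjF hjX).2 t ht hjt
    · rintro ⟨j, hj⟩
      obtain ⟨hjX, hjt⟩ := mem_inter.mp hj
      exact ⟨j, mem_inter.mpr ⟨hXF hjX, hjt⟩⟩
  have hcF : suppConj T items F = suppConj T items X := by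
    unfold suppConj; rw [hFc]
  have hdF : suppDisj T items F = suppDisj T items X := by
    unfold suppDisj; rw [hFd]
  have hbF : bond T items F = bond T items X := by
    unfold bond; rw [hcF, hdF]
  have hFMCR : F ∈ MCR T items I minsupp minbond := by
    refine ⟨hFI, ?_, ?_⟩
    · rw [hbF]; exact hXb
    · rw [hcF]; exact hXr
  refine ⟨hXF, ⟨hFMCR, ?_⟩, hbF, hcF, ?_⟩
  · -- closedness
    intro Y hFY hYI hbY
    have hbYX : bond T items Y = bond T items X := by rw [hbY, hbF]
    obtain ⟨h1, h2⟩ := key_filters T items X Y (hXF.trans hFY.subset) hc hd hbYX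
    obtain ⟨i, hiY, hiF⟩ := exists_of_ssubset hFY
    have hiX : i ∉ X := fun h => hiF (hXF h)
    have hXiY : insert i X ⊆ Y := insert_subset hiY (hXF.trans hFY.subset)
    have e1 : T.filter (fun t => insert i X ⊆ items t) = T.filter (fun t => X ⊆ items t) := by
      apply Finset.Subset.antisymm
      · intro t ht
        simp only [mem_filter] at *
        exact ⟨ht.1, (subset_insert i X).trans ht.2⟩
      · rw [← h1]
        intro t ht
        simp only [mem_filter] at *
        exact ⟨ht.1, hXiY.trans ht.2⟩
    have e2 : T.filter (fun t => ((insert i X) ∩ items t).Nonempty) =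
        T.filter (fun t => (X ∩ items t).Nonempty) := by
      apply Finset.Subset.antisymm
      · rw [← h2]
        intro t ht
        simp only [mem_filter] at *
        exact ⟨ht.1, ht.2.mono (inter_subset_inter hXiY (Finset.Subset.refl _))⟩
      · intro t ht
        simp only [mem_filter] at *
        exact ⟨ht.1, ht.2.mono (inter_subset_inter (subset_insert i X) (Finset.Subset.refl _))⟩
    have hbi : bond T items (insert i X) = bond T items X := by
      unfold bond suppConj suppDisj
      rw [e1, e2]
    apply hiF
    rw [hFdef]
    exact mem_union_right _ (mem_filter.mpr ⟨mem_sdiff.mpr ⟨hYI hiY, hiX⟩, hbi⟩)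
  · -- minimality
    intro G hG hXG i hiF
    by_cases hiX : i ∈ X
    · exact hXG hiX
    obtain ⟨hi1, hi2⟩ := hgood i hiF hiX
    by_contra hiG
    apply hG.2 (insert i G) (ssubset_insert hiG) (insert_subset (hFI hiF) hG.1.1)
    have e1 : T.filter (fun t => insert i G ⊆ items t) = T.filter (fun t => G ⊆ items t) := by
      apply filter_congr
      intro t ht
      constructor
      · intro h; exact (subset_insert i G).trans h
      · intro h
        exact insert_subset (hi1 t ht (hXG.trans h)) h
    have e2 : T.filter (fun t => ((insert i G) ∩ items t).Nonempty) =
        T.filter (fun t => (G ∩ items t).Nonempty) := by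
      apply filter_congr
      intro t ht
      constructor
      · rintro ⟨j, hj⟩
        obtain ⟨hjG, hjt⟩ := mem_inter.mp hj
        rcases mem_insert.mp hjG with h | h
        · subst h
          exact ((hi2 t ht hjt).mono (inter_subset_inter hXG (Finset.Subset.refl _)))
        · exact ⟨j, mem_inter.mpr ⟨h, hjt⟩⟩
      · rintro ⟨j, hj⟩
        obtain ⟨hjG, hjt⟩ := mem_inter.mp hj
        exact ⟨j, mem_inter.mpr ⟨mem_insert_of_mem hjG, hjt⟩⟩
    unfold bond suppConj suppDisj
    rw [e1, e2]
end

section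
/- The bond measure is anti-monotone: for all patterns Y, X with ∅ ≠ Y ⊆ X ⊆ ℐ one has bond(X) ≤ bond(Y). Consequently, for any threshold minbond, if X is correlated (bond(X) ≥ minbond) then every nonempty subset of X is correlated, i.e. the correlated patterns form an order ideal among nonempty patterns. -/
open Finset

variable {τ ι : Type*} [DecidableEq ι]

theorem stmt16 (T : Finset τ) (items : τ → Finset ι) (I : Finset ι)
    (hitems : ∀ t ∈ T, items t ⊆ I) :
    (∀ Y X : Finset ι, Y.Nonempty → Y ⊆ X → X ⊆ I →
      bond T items X ≤ bond T items Y) ∧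
      ∀ minbond : ℚ, ∀ X : Finset ι, X ⊆ I → minbond ≤ bond T items X →
        ∀ Y : Finset ι, Y.Nonempty → Y ⊆ X → minbond ≤ bond T items Y := by
  have main : ∀ Y X : Finset ι, Y.Nonempty → Y ⊆ X →
      bond T items X ≤ bond T items Y := by
    intro Y X hY hYX
    have hc : suppConj T items X ≤ suppConj T items Y := by
      apply card_le_card
      apply monotone_filter_right
      intro t _ ht
      exact hYX.trans ht
    have hd : suppDisj T items Y ≤ suppDisj T items X := by
      apply card_le_card
      apply monotone_filter_right
      intro t _ ht
      exact ht.mono (inter_subset_inter hYX (subset_refl _))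
    have hcd : suppConj T items X ≤ suppDisj T items Y := by
      apply card_le_card
      apply monotone_filter_right
      intro t _ ht
      obtain ⟨y, hy⟩ := hY
      exact ⟨y, mem_inter.2 ⟨hy, ht (hYX hy)⟩⟩
    unfold bond
    rcases Nat.eq_zero_or_pos (suppDisj T items Y) with h0 | hpos
    · have : suppConj T items X = 0 := Nat.le_zero.1 (h0 ▸ hcd)
      simp [this]
      positivity
    · have hposX : (0:ℚ) < suppDisj T items X := by
        exact_mod_cast lt_of_lt_of_le hpos hd
      have hposY : (0:ℚ) < suppDisj T items Y := by exact_mod_cast hpos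
      apply div_le_div₀ (by positivity) (by exact_mod_cast hc) hposY (by exact_mod_cast hd)
  refine ⟨fun Y X hY hYX _ => main Y X hY hYX, fun m X _ hm Y hY hYX => hm.trans (main Y X hY hYX)⟩
end

section
/- Cross-support pruning is sound for the bond measure: let 0 < minbond ≤ 1 and X ⊆ ℐ. If there exist items x, y ∈ X with Supp(∧{x}) < minbond · Supp(∧{y}), then bond(X) < minbond, i.e. X is not correlated. -/
open Finset

variable {τ ι : Type*} [DecidableEq ι]

theorem stmt17 (T : Finset τ) (items : τ → Finset ι) (I : Finset ι)
    (hitems : ∀ t ∈ T, items t ⊆ I)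
    (minbond : ℚ) (hb0 : 0 < minbond) (hb1 : minbond ≤ 1)
    (X : Finset ι) (hXI : X ⊆ I)
    (h : ∃ x ∈ X, ∃ y ∈ X,
      (suppConj T items {x} : ℚ) < minbond * (suppConj T items {y} : ℚ)) :
    bond T items X < minbond := by
  obtain ⟨x, hx, y, hy, hxy⟩ := h
  -- suppConj X ≤ suppConj {x}
  have h1 : suppConj T items X ≤ suppConj T items {x} := by
    apply Finset.card_le_card
    apply Finset.monotone_filter_right
    intro t _ ht
    simp only [Finset.singleton_subset_iff]
    exact ht hx
  -- suppConj {y} ≤ suppDisj X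
  have h2 : suppConj T items {y} ≤ suppDisj T items X := by
    apply Finset.card_le_card
    apply Finset.monotone_filter_right
    intro t _ ht
    exact ⟨y, Finset.mem_inter.mpr ⟨hy, ht (Finset.mem_singleton_self y)⟩⟩
  have hypos : (0:ℚ) < (suppConj T items {y} : ℚ) := by
    by_contra hle
    push_neg at hle
    have : minbond * (suppConj T items {y} : ℚ) ≤ 0 :=
      mul_nonpos_of_nonneg_of_nonpos hb0.le hle
    have : (suppConj T items {x} : ℚ) < 0 := lt_of_lt_of_le hxy this
    exact absurd this (Nat.cast_nonneg _).not_gt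
  have hdpos : (0:ℚ) < (suppDisj T items X : ℚ) :=
    lt_of_lt_of_le hypos (by exact_mod_cast h2)
  rw [bond, div_lt_iff₀ hdpos]
  calc (suppConj T items X : ℚ) ≤ (suppConj T items {x} : ℚ) := by exact_mod_cast h1
    _ < minbond * (suppConj T items {y} : ℚ) := hxy
    _ ≤ minbond * (suppDisj T items X : ℚ) := by
        apply mul_le_mul_of_nonneg_left _ hb0.le
        exact_mod_cast h2
end
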